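/- Fix n ∈ ℕ, ħ > 0, a ∈ ℂⁿ and Λ ∈ Mat_n(ℂ), and let f : ℂⁿ → ℂ be entire. Then for every u ∈ ℂⁿ the series Σ_{k≥0} (1/(k! 2^k)) Σ_{j₁,…,j_k=1}^n (aΛ)_{j₁}⋯(aΛ)_{j_k} (∂_{j₁}⋯∂_{j_k} f)(u), where (aΛ)_j = Σᵢ aᵢΛᵢⱼ, converges to f(u + (1/2) aΛ). Consequently, for Λ = K + J (K symmetric, J skew-symmetric), the star product of the exponential with f satisfies exp(⟨a,u⟩/(iħ)) *_K f(u) = exp(⟨a,u⟩/(iħ)) · f(u + (1/2) a(K+J)), since the k-th series term of the star product equals (iħ)^k/(k!2^k) ΣΛ⋯(∂^k e^{⟨a,·⟩/(iħ)})(∂^k f) = e^{⟨a,u⟩/(iħ)} · (1/(k!2^k)) Σ (aΛ)_{j₁}⋯(aΛ)_{j_k} ∂_{j₁}⋯∂_{j_k} f(u). -/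

import Mathlib

noncomputable section

/-- The pairing `⟨a,b⟩ = ∑ᵢ aᵢ bᵢ` (no conjugation). -/
def dotc {n : ℕ} (a b : Fin n → ℂ) : ℂ := ∑ i, a i * b i

/-- The partial derivative `∂ᵢ` of a function on ℂⁿ. -/
def pd {n : ℕ} (i : Fin n) (f : (Fin n → ℂ) → ℂ) : (Fin n → ℂ) → ℂ :=
  fun u => fderiv ℂ f u (Pi.single i 1)

/-- Iterated partial derivatives `∂_{i₁} ⋯ ∂_{i_k}` along a list of indices. -/
def pds {n : ℕ} : List (Fin n) → ((Fin n → ℂ) → ℂ) → ((Fin n → ℂ) → ℂ)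
  | [], f => f
  | i :: l, f => pd i (pds l f)

/-- The `k`-th term of the K-ordered star-product series. -/
def starTerm {n : ℕ} (ℏ : ℝ) (Λ : Matrix (Fin n) (Fin n) ℂ)
    (f g : (Fin n → ℂ) → ℂ) (k : ℕ) (u : Fin n → ℂ) : ℂ :=
  ((Complex.I * ℏ) ^ k / ((k.factorial : ℂ) * 2 ^ k)) *
    ∑ ι : Fin k → Fin n, ∑ κ : Fin k → Fin n,
      (∏ t, Λ (ι t) (κ t)) * pds (List.ofFn ι) f u * pds (List.ofFn κ) g u

section Aux


open Metric Complex MeasureTheory Real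

variable {n : ℕ}

/-- derivative along a line -/
lemma line_hasDerivAt {f : (Fin n → ℂ) → ℂ} (hf : Differentiable ℂ f) (u b : Fin n → ℂ) (z : ℂ) :
    HasDerivAt (fun w : ℂ => f (u + w • b)) (fderiv ℂ f (u + z • b) b) z := by
  have h1 : HasDerivAt (fun w : ℂ => u + w • b) b z := by
    simpa using ((hasDerivAt_id z).smul_const b).const_add u
  exact ((hf _).hasFDerivAt.comp_hasDerivAt z h1)

lemma line_differentiable {f : (Fin n → ℂ) → ℂ} (hf : Differentiable ℂ f) (u b : Fin n → ℂ) :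
    Differentiable ℂ (fun w : ℂ => f (u + w • b)) :=
  fun z => (line_hasDerivAt hf u b z).differentiableAt

/-- Cauchy estimate for the full Fréchet derivative. -/
lemma fderiv_norm_le_of_ball_bound {f : (Fin n → ℂ) → ℂ} (hf : Differentiable ℂ f)
    {u : Fin n → ℂ} {C : ℝ} (hC : ∀ y, dist y u ≤ 1 → ‖f y‖ ≤ C) :
    ‖fderiv ℂ f u‖ ≤ C := by
  have hC0 : 0 ≤ C := le_trans (norm_nonneg _) (hC u (by simp))
  refine ContinuousLinearMap.opNorm_le_bound _ hC0 (fun b => ?_)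
  rcases eq_or_ne b 0 with rfl | hb
  · simp
  have hbn : (0:ℝ) < ‖b‖ := norm_pos_iff.2 hb
  have hR : (0:ℝ) < ‖b‖⁻¹ := by positivity
  have hd0 : deriv (fun w : ℂ => f (u + w • b)) 0 = fderiv ℂ f u b := by
    have := (line_hasDerivAt hf u b 0).deriv
    simpa using this
  have hbnd : ∀ z ∈ sphere (0:ℂ) (‖b‖⁻¹), ‖f (u + z • b)‖ ≤ C := by
    intro z hz
    apply hC
    have hz' : ‖z‖ = ‖b‖⁻¹ := by simpa using hz
    have : dist (u + z • b) u = ‖z • b‖ := by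
      simp [dist_eq_norm]
    rw [this, norm_smul, hz', inv_mul_cancel₀ (ne_of_gt hbn)]
  have := Complex.norm_deriv_le_of_forall_mem_sphere_norm_le hR
    ((line_differentiable hf u b).diffContOnCl) hbnd
  rw [hd0] at this
  calc ‖fderiv ℂ f u b‖ ≤ C / ‖b‖⁻¹ := this
    _ = C * ‖b‖ := by field_simp

/-- local boundedness of the Fréchet derivative of an entire function -/
lemma exists_fderiv_bound {f : (Fin n → ℂ) → ℂ} (hf : Differentiable ℂ f)
    (u₀ : Fin n → ℂ) (r : ℝ) :
    ∃ M : ℝ, 0 ≤ M ∧ ∀ u ∈ closedBall u₀ r, ‖fderiv ℂ f u‖ ≤ M := by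
  obtain ⟨C, hCb⟩ := (isCompact_closedBall u₀ (r+1)).exists_bound_of_continuousOn
    hf.continuous.continuousOn
  refine ⟨max C 0, le_max_right _ _, fun u hu => ?_⟩
  refine fderiv_norm_le_of_ball_bound hf (fun y hy => ?_)
  refine le_trans (hCb y ?_) (le_max_left _ _)
  have h2 := mem_closedBall.1 hu
  exact mem_closedBall.2 (by have := dist_triangle y u u₀; linarith)

section main
open intervalIntegral
variable {n : ℕ}

/-- An entire function on ℂⁿ has differentiable directional-derivative functions. -/
lemma differentiable_fderiv_apply {f : (Fin n → ℂ) → ℂ} (hf : Differentiable ℂ f)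
    (b : Fin n → ℂ) : Differentiable ℂ (fun u => fderiv ℂ f u b) := by
  intro u₀
  obtain ⟨M, hM0, hM⟩ := exists_fderiv_bound hf u₀ (1 + ‖b‖)
  set μ : Measure ℝ := volume.restrict (Set.Ioc 0 (2*π)) with hμ
  set sc : ℝ → ℂ := fun θ =>
    (2*π*Complex.I)⁻¹ * deriv (circleMap 0 1) θ * (circleMap 0 1 θ) ^ (-2:ℤ) with hsc
  set F : (Fin n → ℂ) → ℝ → ℂ := fun u θ => sc θ * f (u + circleMap 0 1 θ • b) with hF
  set F' : (Fin n → ℂ) → ℝ → ((Fin n → ℂ) →L[ℂ] ℂ) := fun u θ =>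
    sc θ • (fderiv ℂ f (u + circleMap 0 1 θ • b)) with hF'
  -- continuity facts
  have hsc_cont : Continuous sc := by
    have h1 : Continuous fun θ => deriv (circleMap 0 1) θ := by
      simp only [deriv_circleMap]
      exact (continuous_circleMap 0 1).mul continuous_const
    have h2 : Continuous fun θ => (circleMap 0 1 θ) ^ (-2:ℤ) := by
      apply (continuous_circleMap 0 1).zpow₀
      intro θ
      left
      intro h
      have := norm_circleMap_zero 1 θ
      rw [h] at this
      simp at this
    exact ((continuous_const.mul h1).mul h2)
  have hln_cont : ∀ u, Continuous fun θ : ℝ => u + circleMap 0 1 θ • b :=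
    fun u => continuous_const.add ((continuous_circleMap 0 1).smul continuous_const)
  have habs : ∀ θ : ℝ, ‖circleMap 0 1 θ‖ = 1 := fun θ => by
    simp
  have hscnorm : ∀ θ, ‖sc θ‖ ≤ 1 := by
    intro θ
    have h1 : ‖sc θ‖ = ‖((2*π*Complex.I)⁻¹ : ℂ)‖ := by
      rw [hsc]
      simp only [norm_mul, deriv_circleMap, norm_zpow, habs θ, Complex.norm_I]
      norm_num
    have h2 : ‖(2*π*Complex.I : ℂ)‖ = 2*π := by
      simp only [norm_mul, Complex.norm_I, mul_one, Complex.norm_real,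
        Real.norm_eq_abs, _root_.abs_of_nonneg Real.pi_nonneg]
      norm_num
    rw [h1, norm_inv, h2]
    rw [inv_le_one_iff₀]
    right
    linarith [Real.pi_gt_three]
  have hdist : ∀ u ∈ ball u₀ 1, ∀ θ : ℝ,
      (u + circleMap 0 1 θ • b) ∈ closedBall u₀ (1 + ‖b‖) := by
    intro u hu θ
    rw [mem_closedBall]
    have h1 : dist (u + circleMap 0 1 θ • b) u ≤ ‖b‖ := by
      rw [dist_eq_norm]
      simp only [add_sub_cancel_left]
      rw [norm_smul, habs θ, one_mul]
    have h2 := mem_ball.1 hu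
    have h3 := dist_triangle (u + circleMap 0 1 θ • b) u u₀
    linarith
  have key : HasFDerivAt (fun u => ∫ θ, F u θ ∂μ) (∫ θ, F' u₀ θ ∂μ) u₀ := by
    apply _root_.hasFDerivAt_integral_of_dominated_of_fderiv_le (F := F) (F' := F')
      (bound := fun _ => M) (Metric.ball_mem_nhds u₀ one_pos)
    · filter_upwards with u
      exact ((hsc_cont.mul (hf.continuous.comp (hln_cont u))).aestronglyMeasurable)
    · exact (hsc_cont.mul (hf.continuous.comp (hln_cont u₀))).integrableOn_Ioc
    · haveI := FiniteDimensional.proper ℂ ((Fin n → ℂ) →L[ℂ] ℂ)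
      exact ((hsc_cont.stronglyMeasurable).smul
        ((measurable_fderiv ℂ f).comp (hln_cont u₀).measurable).stronglyMeasurable).aestronglyMeasurable
    · filter_upwards with θ u hu
      rw [hF']
      calc ‖sc θ • fderiv ℂ f (u + circleMap 0 1 θ • b)‖
          = ‖sc θ‖ * ‖fderiv ℂ f (u + circleMap 0 1 θ • b)‖ := norm_smul _ _
        _ ≤ 1 * M :=
            mul_le_mul (hscnorm θ) (hM _ (hdist u hu θ)) (norm_nonneg _) zero_le_one
        _ = M := one_mul M
    · exact integrableOn_const measure_Ioc_lt_top.ne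
    · filter_upwards with θ u hu
      have h1 : HasFDerivAt (fun u : Fin n → ℂ => u + circleMap 0 1 θ • b)
          (ContinuousLinearMap.id ℂ _) u := (hasFDerivAt_id u).add_const _
      have h2 := ((hf _).hasFDerivAt.comp u h1)
      rw [ContinuousLinearMap.comp_id] at h2
      exact h2.const_mul (sc θ)
  have heq : ∀ u, fderiv ℂ f u b = ∫ θ, F u θ ∂μ := by
    intro u
    have hg : DiffContOnCl ℂ (fun w : ℂ => f (u + w • b)) (ball 0 1) :=
      (line_differentiable hf u b).diffContOnCl
    have h0 : deriv (fun w : ℂ => f (u + w • b)) 0 = (2 * π * I : ℂ)⁻¹ •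
        ∮ z in C(0, 1), (z - 0) ^ (-2 : ℤ) • (fun w : ℂ => f (u + w • b)) z := by
      have := hg.deriv_eq_smul_circleIntegral one_pos
      rw [eq_inv_smul_iff₀ two_pi_I_ne_zero, ← this]
      simp only [zpow_neg, zpow_ofNat, one_div]
    have hder : deriv (fun w : ℂ => f (u + w • b)) 0 = fderiv ℂ f u b := by
      simpa using (line_hasDerivAt hf u b 0).deriv
    rw [hder] at h0
    rw [h0, circleIntegral, intervalIntegral.integral_of_le (by positivity : (0:ℝ) ≤ 2*π),
      ← MeasureTheory.integral_smul]
    apply MeasureTheory.integral_congr_ae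
    filter_upwards with θ
    rw [hF, hsc]
    simp only [sub_zero, smul_eq_mul]
    ring
  exact (funext heq : (fun u => fderiv ℂ f u b) = _) ▸ key.differentiableAt

end main

section part2
variable {n : ℕ}

lemma pd_differentiable {f : (Fin n → ℂ) → ℂ} (hf : Differentiable ℂ f) (i : Fin n) :
    Differentiable ℂ (pd i f) := differentiable_fderiv_apply hf _

lemma pds_differentiable {f : (Fin n → ℂ) → ℂ} (hf : Differentiable ℂ f)
    (l : List (Fin n)) : Differentiable ℂ (pds l f) := by
  induction l with
  | nil => exact hf
  | cons i l ih => exact pd_differentiable ih i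

lemma pds_append (l : List (Fin n)) (j : Fin n) (f : (Fin n → ℂ) → ℂ) :
    pds (l ++ [j]) f = pds l (pd j f) := by
  induction l with
  | nil => rfl
  | cons i l ih => simp [pds, ih]

lemma deriv_line {h : (Fin n → ℂ) → ℂ} (hh : Differentiable ℂ h) (u c : Fin n → ℂ) (z : ℂ) :
    deriv (fun w : ℂ => h (u + w • c)) z = ∑ j, c j * pd j h (u + z • c) := by
  rw [(line_hasDerivAt hh u c z).deriv]
  have hc : c = ∑ j, c j • (Pi.single j 1 : Fin n → ℂ) := by
    conv_lhs => rw [← Finset.univ_sum_single c]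
    congr 1; funext j
    rw [← Pi.single_smul, smul_eq_mul, mul_one]
  calc (fderiv ℂ h (u + z • c)) c
      = (fderiv ℂ h (u + z • c)) (∑ j, c j • (Pi.single j 1 : Fin n → ℂ)) := by rw [← hc]
    _ = ∑ j, c j * pd j h (u + z • c) := by
        rw [_root_.map_sum]
        exact Finset.sum_congr rfl fun j _ => by
          rw [ContinuousLinearMap.map_smul, smul_eq_mul]; rfl

lemma derivDifferentiable {F : ℂ → ℂ} (hF : Differentiable ℂ F) :
    Differentiable ℂ (deriv F) :=
  ((contDiff_infty_iff_deriv.mp hF.contDiff).2).differentiable (by simp)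

lemma iteratedDeriv_cmul {F : ℂ → ℂ} (hF : Differentiable ℂ F) (c : ℂ) (k : ℕ) :
    iteratedDeriv k (fun z => c * F z) = fun z => c * iteratedDeriv k F z := by
  induction k generalizing F with
  | zero => simp [iteratedDeriv_zero]
  | succ k ih =>
    rw [iteratedDeriv_succ', iteratedDeriv_succ']
    have h1 : deriv (fun z => c * F z) = fun z => c * deriv F z :=
      funext fun z => deriv_const_mul c (hF z)
    rw [h1, ih (derivDifferentiable hF)]

lemma iteratedDeriv_finsum {ι : Type*} (s : Finset ι) (F : ι → ℂ → ℂ)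
    (hF : ∀ j ∈ s, Differentiable ℂ (F j)) (k : ℕ) :
    iteratedDeriv k (fun w => ∑ j ∈ s, F j w) = fun z => ∑ j ∈ s, iteratedDeriv k (F j) z := by
  induction k generalizing F with
  | zero => simp [iteratedDeriv_zero]
  | succ k ih =>
    rw [iteratedDeriv_succ']
    have h1 : deriv (fun w => ∑ j ∈ s, F j w) = fun w => ∑ j ∈ s, deriv (F j) w :=
      funext fun w => deriv_fun_sum (fun j hj => (hF j hj).differentiableAt)
    rw [h1, ih (fun j => deriv (F j)) (fun j hj => derivDifferentiable (hF j hj))]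
    funext z
    exact Finset.sum_congr rfl fun j _ => by rw [iteratedDeriv_succ']

end part2

section part3
variable {n : ℕ}

def snocEquiv (n k : ℕ) : ((Fin k → Fin n) × Fin n) ≃ (Fin (k+1) → Fin n) where
  toFun p := Fin.snoc p.1 p.2
  invFun g := (fun i => g i.castSucc, g (Fin.last k))
  left_inv p := by ext i <;> simp
  right_inv g := Fin.snoc_init_self g

lemma ofFn_snoc (v : Fin k → Fin n) (j : Fin n) :
    List.ofFn (Fin.snoc v j : Fin (k+1) → Fin n) = List.ofFn v ++ [j] := by
  rw [List.ofFn_succ', List.concat_eq_append]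
  congr 1
  · congr 1
    funext i
    exact Fin.snoc_castSucc _ _ _
  · rw [Fin.snoc_last]

lemma iteratedDeriv_line (k : ℕ) :
    ∀ (f : (Fin n → ℂ) → ℂ), Differentiable ℂ f → ∀ (u c : Fin n → ℂ) (z : ℂ),
    iteratedDeriv k (fun w : ℂ => f (u + w • c)) z
      = ∑ v : Fin k → Fin n, (∏ t, c (v t)) * pds (List.ofFn v) f (u + z • c) := by
  induction k with
  | zero =>
    intro f hf u c z
    simp [iteratedDeriv_zero, pds]
  | succ k ih =>
    intro f hf u c z
    rw [iteratedDeriv_succ']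
    have hder : deriv (fun w : ℂ => f (u + w • c))
        = fun w => ∑ j, c j * pd j f (u + w • c) :=
      funext fun w => deriv_line hf u c w
    rw [hder]
    have hstep : iteratedDeriv k (fun w : ℂ => ∑ j, c j * pd j f (u + w • c)) z
        = ∑ j, c j * ∑ v : Fin k → Fin n,
            (∏ t, c (v t)) * pds (List.ofFn v) (pd j f) (u + z • c) := by
      rw [iteratedDeriv_finsum Finset.univ (fun j => fun w => c j * pd j f (u + w • c))
        (fun j _ => (line_differentiable (pd_differentiable hf j) u c).const_mul (c j)) k]
      refine Finset.sum_congr rfl fun j _ => ?_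
      rw [iteratedDeriv_cmul (line_differentiable (pd_differentiable hf j) u c) (c j) k]
      dsimp only
      rw [ih (pd j f) (pd_differentiable hf j) u c z]
    rw [hstep]
    -- reindex the RHS over `Fin (k+1) → Fin n` via snoc
    rw [← Equiv.sum_comp (snocEquiv n k)
      (fun v : Fin (k+1) → Fin n => (∏ t, c (v t)) * pds (List.ofFn v) f (u + z • c))]
    rw [Fintype.sum_prod_type]
    rw [Finset.sum_comm]
    refine Finset.sum_congr rfl fun j _ => ?_
    rw [Finset.mul_sum]
    refine Finset.sum_congr rfl fun v _ => ?_
    have h1 : (snocEquiv n k) (v, j) = Fin.snoc v j := rfl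
    rw [h1, ofFn_snoc, pds_append]
    have h3 : (fun t : Fin (k+1) => c ((Fin.snoc v j : Fin (k+1) → Fin n) t))
        = Fin.snoc (c ∘ v) (c j) := by
      rw [← Fin.comp_snoc]
      rfl
    have h2 : (∏ t : Fin (k+1), c ((Fin.snoc v j : Fin (k+1) → Fin n) t))
        = (∏ t : Fin k, c (v t)) * c j := by
      rw [h3]
      simpa using Fin.prod_snoc (c j) (c ∘ v)
    rw [h2]
    ring

end part3

section part4
variable {n : ℕ}

lemma hasSum_translation {f : (Fin n → ℂ) → ℂ} (hf : Differentiable ℂ f)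
    (d u : Fin n → ℂ) :
    HasSum (fun k : ℕ =>
        (1 / ((k.factorial : ℂ) * 2 ^ k)) *
          ∑ v : Fin k → Fin n, (∏ t, d (v t)) * pds (List.ofFn v) f u)
      (f (u + (2⁻¹ : ℂ) • d)) := by
  set c : Fin n → ℂ := (2⁻¹ : ℂ) • d with hc
  have hg : Differentiable ℂ (fun w : ℂ => f (u + w • c)) := line_differentiable hf u c
  have H := Complex.hasSum_taylorSeries_of_entire hg 0 1
  have hterm : ∀ k : ℕ,
      (1 / ((k.factorial : ℂ) * 2 ^ k)) *
          ∑ v : Fin k → Fin n, (∏ t, d (v t)) * pds (List.ofFn v) f u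
      = (k.factorial : ℂ)⁻¹ • ((1:ℂ) - 0) ^ k •
          iteratedDeriv k (fun w : ℂ => f (u + w • c)) 0 := by
    intro k
    rw [iteratedDeriv_line k f hf u c 0]
    simp only [zero_smul, add_zero, sub_zero, one_pow, smul_eq_mul, one_mul]
    rw [Finset.mul_sum, Finset.mul_sum]
    refine Finset.sum_congr rfl fun v _ => ?_
    have hcv : (∏ t, c (v t)) = (2⁻¹:ℂ)^k * ∏ t, d (v t) := by
      rw [hc]
      simp only [Pi.smul_apply, smul_eq_mul]
      rw [Finset.prod_mul_distrib, Finset.prod_const]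
      simp
    rw [hcv]
    have h2k : ((2:ℂ)^k : ℂ) ≠ 0 := pow_ne_zero _ two_ne_zero
    have hfk : ((k.factorial : ℂ)) ≠ 0 := Nat.cast_ne_zero.2 k.factorial_ne_zero
    field_simp
    have h2 : (2:ℂ)^k * (1/2)^k = 1 := by rw [← mul_pow]; norm_num
    linear_combination (-((∏ t, d (v t)) * pds (List.ofFn v) f u)) * h2
  have heq : (fun k : ℕ =>
      (1 / ((k.factorial : ℂ) * 2 ^ k)) *
        ∑ v : Fin k → Fin n, (∏ t, d (v t)) * pds (List.ofFn v) f u)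
      = fun k : ℕ => (k.factorial : ℂ)⁻¹ • ((1:ℂ) - 0) ^ k •
          iteratedDeriv k (fun w : ℂ => f (u + w • c)) 0 := funext hterm
  rw [heq]
  have hval : f (u + (2⁻¹ : ℂ) • d) = f (u + (1:ℂ) • c) := by rw [one_smul, hc]
  rw [hval]
  exact H

end part4

section part5
variable {n : ℕ}

def expL (c₀ : ℂ) (a : Fin n → ℂ) : (Fin n → ℂ) →L[ℂ] ℂ :=
  ∑ i, (c₀ * a i) • ContinuousLinearMap.proj i

lemma expL_apply (c₀ : ℂ) (a w : Fin n → ℂ) : expL c₀ a w = c₀ * dotc a w := by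
  simp only [expL, dotc, ContinuousLinearMap.sum_apply, ContinuousLinearMap.smul_apply,
    ContinuousLinearMap.proj_apply, smul_eq_mul, Finset.mul_sum]
  exact Finset.sum_congr rfl fun i _ => by ring

lemma expL_single (c₀ : ℂ) (a : Fin n → ℂ) (i : Fin n) :
    expL c₀ a (Pi.single i 1) = c₀ * a i := by
  rw [expL_apply]
  simp [dotc, Pi.single_apply, Finset.mul_sum]

lemma exp_hasFDerivAt (c₀ : ℂ) (a : Fin n → ℂ) (u : Fin n → ℂ) :
    HasFDerivAt (fun w => Complex.exp (c₀ * dotc a w))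
      (Complex.exp (c₀ * dotc a u) • expL c₀ a) u := by
  have h1 : HasFDerivAt (fun w => c₀ * dotc a w) (expL c₀ a) u := by
    have h2 := (expL c₀ a).hasFDerivAt (x := u)
    have h3 : (fun w => c₀ * dotc a w) = fun w => expL c₀ a w :=
      funext fun w => (expL_apply c₀ a w).symm
    rw [h3]
    exact h2
  exact h1.cexp

lemma exp_differentiable (c₀ : ℂ) (a : Fin n → ℂ) :
    Differentiable ℂ (fun w : Fin n → ℂ => Complex.exp (c₀ * dotc a w)) :=
  fun u => (exp_hasFDerivAt c₀ a u).differentiableAt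

lemma pd_exp (c₀ : ℂ) (a : Fin n → ℂ) (i : Fin n) :
    pd i (fun w : Fin n → ℂ => Complex.exp (c₀ * dotc a w))
      = fun u => (c₀ * a i) * Complex.exp (c₀ * dotc a u) := by
  funext u
  show fderiv ℂ _ u (Pi.single i 1) = _
  rw [(exp_hasFDerivAt c₀ a u).fderiv]
  rw [ContinuousLinearMap.smul_apply, expL_single, smul_eq_mul]
  ring

lemma pd_cmul {g : (Fin n → ℂ) → ℂ} (hg : Differentiable ℂ g) (C : ℂ) (i : Fin n) :
    pd i (fun u => C * g u) = fun u => C * pd i g u := by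
  funext u
  show fderiv ℂ _ u (Pi.single i 1) = _
  rw [fderiv_const_mul (hg u) C]
  rfl

lemma pds_exp (c₀ : ℂ) (a : Fin n → ℂ) (l : List (Fin n)) :
    pds l (fun w : Fin n → ℂ => Complex.exp (c₀ * dotc a w))
      = fun u => (l.map fun i => c₀ * a i).prod * Complex.exp (c₀ * dotc a u) := by
  induction l with
  | nil => funext u; simp [pds]
  | cons i l ih =>
    show pd i _ = _
    rw [ih, pd_cmul (exp_differentiable c₀ a) _ i, pd_exp]
    funext u
    simp only [List.map_cons, List.prod_cons]
    ring

end part5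

section part6
variable {n : ℕ}

lemma starTerm_exp {ℏ : ℝ} (hℏ : 0 < ℏ) (a : Fin n → ℂ) (Λ : Matrix (Fin n) (Fin n) ℂ)
    (f : (Fin n → ℂ) → ℂ) (aΛ : Fin n → ℂ) (haΛ : aΛ = fun j => ∑ i, a i * Λ i j)
    (k : ℕ) (u : Fin n → ℂ) :
    starTerm ℏ Λ (fun w => Complex.exp ((1 / (Complex.I * ℏ)) * dotc a w)) f k u
      = Complex.exp ((1 / (Complex.I * ℏ)) * dotc a u) *
        ((1 / ((k.factorial : ℂ) * 2 ^ k)) *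
          ∑ v : Fin k → Fin n, (∏ t, aΛ (v t)) * pds (List.ofFn v) f u) := by
  set c₀ : ℂ := 1 / (Complex.I * ℏ) with hc₀
  set Eu : ℂ := Complex.exp (c₀ * dotc a u) with hEu
  have hne : Complex.I * (ℏ:ℂ) ≠ 0 :=
    mul_ne_zero Complex.I_ne_zero (Complex.ofReal_ne_zero.2 hℏ.ne')
  have hpow : (Complex.I * (ℏ:ℂ)) ^ k * c₀ ^ k = 1 := by
    rw [← mul_pow, hc₀, mul_one_div_cancel hne, one_pow]
  have hpds : ∀ ι : Fin k → Fin n,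
      pds (List.ofFn ι) (fun w => Complex.exp (c₀ * dotc a w)) u
        = (c₀ ^ k * ∏ t, a (ι t)) * Eu := by
    intro ι
    rw [pds_exp]
    dsimp only
    rw [List.map_ofFn, List.prod_ofFn]
    have : (∏ t, (c₀ * a (ι t))) = c₀ ^ k * ∏ t, a (ι t) := by
      rw [Finset.prod_mul_distrib, Finset.prod_const]
      simp
    rw [show ((fun i => c₀ * a i) ∘ ι) = fun t => c₀ * a (ι t) from rfl, this]
  rw [starTerm]
  rw [Finset.sum_comm]
  have hinner : ∀ κ : Fin k → Fin n,
      (∑ ι : Fin k → Fin n, (∏ t, Λ (ι t) (κ t)) *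
          pds (List.ofFn ι) (fun w => Complex.exp (c₀ * dotc a w)) u *
          pds (List.ofFn κ) f u)
        = (c₀ ^ k * ∏ t, aΛ (κ t)) * (Eu * pds (List.ofFn κ) f u) := by
    intro κ
    have h2 : ∀ ι : Fin k → Fin n,
        (∏ t, Λ (ι t) (κ t)) *
            pds (List.ofFn ι) (fun w => Complex.exp (c₀ * dotc a w)) u *
            pds (List.ofFn κ) f u
          = (c₀ ^ k * (Eu * pds (List.ofFn κ) f u)) *
              ∏ t, (a (ι t) * Λ (ι t) (κ t)) := by
      intro ι
      rw [hpds ι, Finset.prod_mul_distrib]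
      ring
    rw [Finset.sum_congr rfl fun ι _ => h2 ι, ← Finset.mul_sum]
    have h3 : (∑ ι : Fin k → Fin n, ∏ t, (a (ι t) * Λ (ι t) (κ t))) = ∏ t, aΛ (κ t) := by
      rw [show (Finset.univ : Finset (Fin k → Fin n))
          = Fintype.piFinset (fun _ => Finset.univ) from (Fintype.piFinset_univ).symm]
      rw [← Finset.prod_univ_sum (fun _ => Finset.univ) (fun t j => a j * Λ j (κ t))]
      exact Finset.prod_congr rfl fun t _ => by rw [haΛ]
    rw [h3]
    ring
  rw [Finset.sum_congr rfl fun κ _ => hinner κ]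
  rw [Finset.mul_sum, Finset.mul_sum, Finset.mul_sum]
  refine Finset.sum_congr rfl fun κ _ => ?_
  have hfk : ((k.factorial : ℂ)) ≠ 0 := Nat.cast_ne_zero.2 k.factorial_ne_zero
  have h2k : ((2:ℂ)^k) ≠ 0 := pow_ne_zero _ two_ne_zero
  field_simp
  linear_combination (Eu * (∏ t, aΛ (κ t)) * pds (List.ofFn κ) f u) * hpow

end part6
end Aux


/-- for an entire `f`, the translation series
`Σ_k (1/(k!2^k)) Σ_v (aΛ)_{v₁}⋯(aΛ)_{v_k} ∂_{v₁}⋯∂_{v_k} f(u)` converges to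
`f(u + (1/2)aΛ)`, and consequently the star product of the exponential with `f` is
`exp(⟨a,u⟩/(iℏ)) *_K f(u) = exp(⟨a,u⟩/(iℏ)) · f(u + (1/2)a(K+J))`. -/
theorem stmt7 {n : ℕ} (ℏ : ℝ) (hℏ : 0 < ℏ)
    (a : Fin n → ℂ) (Λ : Matrix (Fin n) (Fin n) ℂ)
    (f : (Fin n → ℂ) → ℂ) (hf : Differentiable ℂ f)
    (aΛ : Fin n → ℂ) (haΛ : aΛ = fun j => ∑ i, a i * Λ i j) :
    (∀ u : Fin n → ℂ,
      HasSum (fun k : ℕ =>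
          (1 / ((k.factorial : ℂ) * 2 ^ k)) *
            ∑ v : Fin k → Fin n,
              (∏ t, aΛ (v t)) * pds (List.ofFn v) f u)
        (f (u + (2⁻¹ : ℂ) • aΛ))) ∧
    (∀ K J : Matrix (Fin n) (Fin n) ℂ, K.IsSymm → J.transpose = -J → Λ = K + J →
      ∀ u : Fin n → ℂ,
        HasSum (fun k : ℕ =>
            starTerm ℏ Λ (fun w => Complex.exp ((1 / (Complex.I * ℏ)) * dotc a w)) f k u)
          (Complex.exp ((1 / (Complex.I * ℏ)) * dotc a u) * f (u + (2⁻¹ : ℂ) • aΛ))) := by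
  constructor
  · intro u
    exact hasSum_translation hf aΛ u
  · intro K J _ _ _ u
    have h1 := (hasSum_translation hf aΛ u).mul_left
      (Complex.exp ((1 / (Complex.I * ℏ)) * dotc a u))
    have heq : (fun k : ℕ =>
        starTerm ℏ Λ (fun w => Complex.exp ((1 / (Complex.I * ℏ)) * dotc a w)) f k u)
        = fun k : ℕ => Complex.exp ((1 / (Complex.I * ℏ)) * dotc a u) *
            ((1 / ((k.factorial : ℂ) * 2 ^ k)) *
              ∑ v : Fin k → Fin n, (∏ t, aΛ (v t)) * pds (List.ofFn v) f u) :=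
      funext fun k => starTerm_exp hℏ a Λ f aΛ haΛ k u
    rw [heq]
    exact h1

end
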